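/- If the averaging matrix Ω ∈ ℝ^{n×n} is symmetric, then the S-flow Ṡ = R_S[ΩS] is the Riemannian gradient descent flow of the potential J(S) = −(1/2)⟨S, ΩS⟩, i.e., R_S[ΩS] = −R_S[∇J(S)] where ∇J(S) = −ΩS is the Euclidean gradient. -/

import Mathlib

open Finset Real

/-- The open probability simplex in ℝ^c. -/
def simplexS (c : ℕ) : Set (Fin c → ℝ) := {p | (∀ i, 0 < p i) ∧ ∑ i, p i = 1}

/-- Tangent space: vectors with zero coordinate sum. -/
def T0 (c : ℕ) : Set (Fin c → ℝ) := {v | ∑ i, v i = 0}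

/-- Orthogonal projection onto T0. -/
noncomputable def proj0 {c : ℕ} (u : Fin c → ℝ) : Fin c → ℝ :=
  fun i => u i - (∑ j, u j) / c

/-- exp_p(v) = (p ⊙ e^v)/⟨p, e^v⟩. -/
noncomputable def expMap {c : ℕ} (p v : Fin c → ℝ) : Fin c → ℝ :=
  fun i => p i * Real.exp (v i) / ∑ j, p j * Real.exp (v j)

/-- Inverse of exp_p restricted to T0: exp_p⁻¹(q) = Π₀[log(q/p)]. -/
noncomputable def expInv {c : ℕ} (p q : Fin c → ℝ) : Fin c → ℝ :=
  proj0 (fun i => Real.log (q i / p i))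

/-- R_q[u] = q ⊙ u − ⟨q,u⟩ q. -/
def Rmap {c : ℕ} (q u : Fin c → ℝ) : Fin c → ℝ :=
  fun i => q i * u i - (∑ j, q j * u j) * q i

/-- Barycenter 𝟙ₛ = (1/c,…,1/c). -/
noncomputable def bary (c : ℕ) : Fin c → ℝ := fun _ => 1 / c

theorem stmt17 {n c : ℕ} (Ω : Matrix (Fin n) (Fin n) ℝ) (hΩ : Ω.IsSymm)
    (S : Fin n → Fin c → ℝ) (hS : ∀ i, S i ∈ simplexS c) :
    ∃ f' : (Fin n → Fin c → ℝ) →L[ℝ] ℝ,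
      HasFDerivAt (fun M : Fin n → Fin c → ℝ =>
          -(1/2) * ∑ i, ∑ k, M i k * (∑ j, Ω i j * M j k)) f' S ∧
      (∀ V : Fin n → Fin c → ℝ, f' V = ∑ i, ∑ k, (-(∑ j, Ω i j * S j k)) * V i k) ∧
      (∀ i, Rmap (S i) (fun k => ∑ j, Ω i j * S j k) =
        -(Rmap (S i) (fun k => -(∑ j, Ω i j * S j k)))) := by
  classical
  -- coordinate evaluation as a continuous linear map
  let coord : Fin n → Fin c → ((Fin n → Fin c → ℝ) →L[ℝ] ℝ) := fun i k =>
    (ContinuousLinearMap.proj (R := ℝ) (φ := fun _ : Fin c => ℝ) k).comp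
      (ContinuousLinearMap.proj (R := ℝ) (φ := fun _ : Fin n => Fin c → ℝ) i)
  have hcoord : ∀ i k, HasFDerivAt (fun M : Fin n → Fin c → ℝ => M i k) (coord i k) S := by
    intro i k
    exact (coord i k).hasFDerivAt
  -- derivative of the inner sum
  have hin : ∀ i k, HasFDerivAt (fun M : Fin n → Fin c → ℝ => ∑ j, Ω i j * M j k)
      (∑ j, Ω i j • coord j k) S := by
    intro i k
    exact HasFDerivAt.fun_sum (fun j _ => (hcoord j k).const_mul (Ω i j))
  have hD : HasFDerivAt (fun M : Fin n → Fin c → ℝ =>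
      -(1/2) * ∑ i, ∑ k, M i k * (∑ j, Ω i j * M j k))
      ((-(1/2) : ℝ) • ∑ i, ∑ k,
        ((S i k) • (∑ j, Ω i j • coord j k) + (∑ j, Ω i j * S j k) • coord i k)) S := by
    exact (HasFDerivAt.fun_sum (fun i _ => HasFDerivAt.fun_sum (fun k _ =>
      (hcoord i k).mul (hin i k)))).const_mul (-(1/2))
  refine ⟨_, hD, ?_, ?_⟩
  · intro V
    have hcv : ∀ i k, coord i k V = V i k := fun i k => rfl
    simp only [ContinuousLinearMap.smul_apply, ContinuousLinearMap.sum_apply,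
      ContinuousLinearMap.add_apply, hcv, smul_eq_mul]
    have hsymm : ∀ i j, Ω j i = Ω i j := fun i j => by
      have := congrFun (congrFun hΩ i) j
      simpa [Matrix.transpose_apply] using this
    have h1 : ∑ i, ∑ k, S i k * ∑ j, Ω i j * V j k
        = ∑ i, ∑ k, ∑ j, Ω j i * S i k * V j k := by
      refine Finset.sum_congr rfl fun i _ => Finset.sum_congr rfl fun k _ => ?_
      rw [Finset.mul_sum]
      refine Finset.sum_congr rfl fun j _ => ?_
      rw [hsymm i j]; ring
    have h2 : ∑ i, ∑ k, (∑ j, Ω i j * S j k) * V i k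
        = ∑ j, ∑ k, ∑ i, Ω j i * S i k * V j k := by
      refine Finset.sum_congr rfl fun j _ => Finset.sum_congr rfl fun k _ => ?_
      rw [Finset.sum_mul]
    have hsym : (∑ i, ∑ k, S i k * ∑ j, Ω i j * V j k)
        = ∑ i, ∑ k, (∑ j, Ω i j * S j k) * V i k := by
      rw [h1, h2]
      rw [Finset.sum_comm]
      conv_rhs => rw [Finset.sum_comm]
      exact Finset.sum_congr rfl fun k _ => Finset.sum_comm
    have hneg : ∑ i, ∑ k, (-(∑ j, Ω i j * S j k)) * V i k
        = -∑ i, ∑ k, (∑ j, Ω i j * S j k) * V i k := by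
      simp [neg_mul, Finset.sum_neg_distrib]
    simp only [Finset.sum_add_distrib]
    rw [hsym, hneg]
    ring
  · intro i
    funext k
    simp only [Rmap, mul_neg, Finset.sum_neg_distrib, Pi.neg_apply]
    ring
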